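/- Let b ≥ 3 and W ⊊ {0,1,…,b−1} with |W| ≥ 2. Then C_{b,W} contains at most finitely many rational numbers p/q (in lowest terms) where q is a safe prime, i.e. both q and (q−1)/2 are prime. -/

import Mathlib

/-- The missing digit Cantor set `C_{b,W}`. -/
def missingDigitSet (b : ℕ) (W : Finset ℕ) : Set ℝ :=
  {x | ∃ w : ℕ → ℕ, (∀ j, w j ∈ W) ∧ x = ∑' j : ℕ, (w j : ℝ) / (b : ℝ) ^ (j + 1)}

namespace Stmt15

variable {b : ℕ}

lemma summable_digits (hb : 2 ≤ b) (w : ℕ → ℕ) (hw : ∀ j, w j < b) :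
    Summable (fun j => (w j : ℝ) / (b : ℝ) ^ (j + 1)) := by
  have hb0 : (0:ℝ) < b := by positivity
  have h1 : (1:ℝ)/b < 1 := by
    rw [div_lt_one hb0]; exact_mod_cast hb.trans_lt' one_lt_two
  have key : ∀ j : ℕ, (w j : ℝ) / (b : ℝ) ^ (j + 1) ≤ (b:ℝ) * ((1:ℝ)/b) ^ (j+1) := by
    intro j
    have h2 : (b:ℝ) * ((1:ℝ)/b) ^ (j+1) = (b:ℝ) / (b:ℝ)^(j+1) := by
      rw [div_pow, one_pow]; ring
    rw [h2]
    have : (w j : ℝ) ≤ b := by exact_mod_cast (hw j).le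
    gcongr
  apply Summable.of_nonneg_of_le (fun j => by positivity) key
  exact Summable.mul_left _ ((summable_geometric_of_lt_one (by positivity) h1).comp_injective
      (add_left_injective 1))

lemma tsum_geom_digits (hb : 2 ≤ b) :
    ∑' j : ℕ, ((b:ℝ) - 1) / (b : ℝ) ^ (j + 1) = 1 := by
  have hb0 : (0:ℝ) < b := by positivity
  have hb1 : (1:ℝ) < b := by exact_mod_cast hb.trans_lt' one_lt_two
  have hbne : (b:ℝ) - 1 ≠ 0 := by nlinarith
  have h1 : (1:ℝ)/b < 1 := by rw [div_lt_one hb0]; exact hb1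
  have : ∀ j : ℕ, ((b:ℝ) - 1) / (b:ℝ) ^ (j+1) = (((b:ℝ)-1)/b) * ((1:ℝ)/b)^j := by
    intro j
    rw [div_pow, one_pow, div_mul_div_comm, mul_one, ← pow_succ']
  rw [tsum_congr this, tsum_mul_left, tsum_geometric_of_lt_one (by positivity) h1]
  rw [one_sub_div hb0.ne']
  rw [mul_inv_eq_one₀ (by positivity)]


/-- tail sums of the digit expansion -/
noncomputable def tail (b : ℕ) (w : ℕ → ℕ) (k : ℕ) : ℝ :=
  ∑' j : ℕ, (w (k + j) : ℝ) / (b : ℝ) ^ (j + 1)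

lemma tail_nonneg (w : ℕ → ℕ) (k : ℕ) : 0 ≤ tail b w k :=
  tsum_nonneg (fun j => by positivity)

lemma tail_le_one (hb : 2 ≤ b) (w : ℕ → ℕ) (hw : ∀ j, w j < b) (k : ℕ) :
    tail b w k ≤ 1 := by
  rw [← tsum_geom_digits hb]
  apply Summable.tsum_le_tsum _ (summable_digits hb _ (fun j => hw _))
    ((summable_digits hb (fun _ => b - 1) (fun j => by simpa using Nat.sub_lt (by omega) one_pos)).congr ?_)
  · intro j
    gcongr
    have := hw (k + j)
    have h1 : (w (k+j) : ℝ) ≤ (b:ℝ) - 1 := by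
      have : (w (k+j) : ℝ) + 1 ≤ (b:ℝ) := by exact_mod_cast this
      linarith
    exact h1
  · intro j
    congr 1
    have : (1:ℕ) ≤ b := by omega
    push_cast [this]
    ring

lemma tail_rec (hb : 2 ≤ b) (w : ℕ → ℕ) (hw : ∀ j, w j < b) (k : ℕ) :
    (b : ℝ) * tail b w k = w k + tail b w (k + 1) := by
  have hb0 : (0:ℝ) < b := by positivity
  have hs : Summable (fun j => (w (k + j) : ℝ) / (b : ℝ) ^ (j + 1)) :=
    summable_digits hb _ (fun j => hw _)
  rw [tail, Summable.tsum_eq_zero_add hs]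
  have h1 : ∀ j : ℕ, (w (k + (j+1)) : ℝ) / (b:ℝ)^(j+1+1)
      = (1/b) * ((w (k + 1 + j) : ℝ) / (b:ℝ)^(j+1)) := by
    intro j
    rw [show k + (j+1) = k + 1 + j by ring, pow_succ, ← div_div, div_eq_inv_mul, one_div]
  rw [tsum_congr h1, tsum_mul_left]
  rw [tail]
  rw [mul_add]
  rw [add_zero, pow_one]
  field_simp

lemma pow_mul_eq_int_add_tail (hb : 2 ≤ b) (w : ℕ → ℕ) (hw : ∀ j, w j < b) (k : ℕ) :
    ∃ m : ℤ, (b:ℝ)^k * tail b w 0 = m + tail b w k := by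
  induction k with
  | zero => exact ⟨0, by simp⟩
  | succ k ih =>
    obtain ⟨m, hm⟩ := ih
    refine ⟨b * m + w k, ?_⟩
    rw [pow_succ, mul_comm ((b:ℝ)^k), mul_assoc, hm, mul_add, tail_rec hb w hw k]
    push_cast
    ring

lemma tsum_eq_prefix_add_tail (hb : 2 ≤ b) (w : ℕ → ℕ) (hw : ∀ j, w j < b) (n : ℕ) :
    tail b w 0 = (∑ j ∈ Finset.range n, (w j : ℝ) / (b:ℝ)^(j+1)) + (1/(b:ℝ)^n) * tail b w n := by
  have hs : Summable (fun j => (w (0 + j) : ℝ) / (b : ℝ) ^ (j + 1)) :=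
    summable_digits hb _ (fun j => hw _)
  have hs' : Summable (fun j => (w j : ℝ) / (b : ℝ) ^ (j + 1)) :=
    summable_digits hb _ hw
  have h0 : tail b w 0 = ∑' j : ℕ, (w j : ℝ) / (b : ℝ) ^ (j + 1) := by
    apply tsum_congr; intro j; rw [Nat.zero_add]
  rw [h0, ← Summable.sum_add_tsum_nat_add n hs']
  congr 1
  have h1 : ∀ j : ℕ, (w (n + j) : ℝ) / (b:ℝ)^(n + j + 1)
      = (1/(b:ℝ)^n) * ((w (n + j) : ℝ) / (b:ℝ)^(j+1)) := by
    intro j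
    rw [show n + j + 1 = n + (j+1) by ring, pow_add]
    field_simp
  calc ∑' j : ℕ, (w (j + n) : ℝ) / (b:ℝ)^(j + n + 1)
      = ∑' j : ℕ, (1/(b:ℝ)^n) * ((w (n + j) : ℝ) / (b:ℝ)^(j+1)) := by
        apply tsum_congr; intro j
        rw [show j + n = n + j by ring, h1]
    _ = (1/(b:ℝ)^n) * tail b w n := by rw [tsum_mul_left]; rfl


lemma mem_iff_tail (x : ℝ) (W : Finset ℕ) :
    x ∈ missingDigitSet b W ↔ ∃ w : ℕ → ℕ, (∀ j, w j ∈ W) ∧ x = tail b w 0 := by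
  unfold missingDigitSet tail
  constructor <;> rintro ⟨w, hw, hx⟩ <;> exact ⟨w, hw, by simpa using hx⟩

/-- Counting lemma: at most `2·|W|^n` points `a/q` lie in the Cantor set. -/
lemma count_lemma (hb : 2 ≤ b) (W : Finset ℕ) (hWsub : W ⊆ Finset.range b)
    (q n : ℕ) (hq : 0 < q) (hn : (q:ℝ) ≤ (b:ℝ)^n) (A : Finset ℕ)
    (hAmem : ∀ a ∈ A, ((a:ℝ)/(q:ℝ)) ∈ missingDigitSet b W) :
    A.card ≤ 2 * W.card ^ n := by
  classical
  have hch : ∀ a ∈ A, ∃ w : ℕ → ℕ, (∀ j, w j ∈ W) ∧ ((a:ℝ)/(q:ℝ)) = tail b w 0 := by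
    intro a ha
    exact (mem_iff_tail _ _).1 (hAmem a ha)
  choose! D hD1 hD2 using hch
  have hDb : ∀ a ∈ A, ∀ j, D a j < b := by
    intro a ha j
    simpa using hWsub (hD1 a ha j)
  -- the prefix map
  set g : ℕ → (Fin n → ℕ) := fun a => fun i => D a i with hg
  -- each a/q is within b⁻ⁿ of the prefix sum determined by g a
  have key : ∀ a ∈ A, (∑ j ∈ Finset.range n, (D a j : ℝ) / (b:ℝ)^(j+1)) ≤ (a:ℝ)/(q:ℝ)
      ∧ (a:ℝ)/(q:ℝ) ≤ (∑ j ∈ Finset.range n, (D a j : ℝ) / (b:ℝ)^(j+1)) + 1/(b:ℝ)^n := by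
    intro a ha
    have h1 := tsum_eq_prefix_add_tail hb (D a) (hDb a ha) n
    rw [← hD2 a ha] at h1
    have h2 := tail_nonneg (b := b) (D a) n
    have h3 := tail_le_one hb (D a) (hDb a ha) n
    have hbn : (0:ℝ) < (1:ℝ)/(b:ℝ)^n := by positivity
    constructor
    · nlinarith
    · nlinarith
  -- same prefix implies within distance 1
  have fiber : ∀ a ∈ A, ∀ a' ∈ A, g a = g a' → a' ≤ a + 1 := by
    intro a ha a' ha' hgg
    have hsum : (∑ j ∈ Finset.range n, (D a j : ℝ) / (b:ℝ)^(j+1))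
        = (∑ j ∈ Finset.range n, (D a' j : ℝ) / (b:ℝ)^(j+1)) := by
      apply Finset.sum_congr rfl
      intro j hj
      rw [Finset.mem_range] at hj
      have := congrFun hgg ⟨j, hj⟩
      simp only [hg] at this
      rw [this]
    have k1 := (key a ha).1
    have k2 := (key a ha).2
    have k3 := (key a' ha').1
    have k4 := (key a' ha').2
    have hq0 : (0:ℝ) < q := by exact_mod_cast hq
    have hbn0 : (0:ℝ) < (b:ℝ)^n := by positivity
    have hd : (a':ℝ)/(q:ℝ) - (a:ℝ)/(q:ℝ) ≤ 1/(b:ℝ)^n := by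
      rw [hsum] at k1 k2; linarith
    have hd2 : (1:ℝ)/(b:ℝ)^n ≤ 1/(q:ℝ) := by
      apply div_le_div_of_nonneg_left one_pos.le hq0 hn |>.trans_eq rfl
    have : (a':ℝ) ≤ (a:ℝ) + 1 := by
      have := hd.trans hd2
      rw [div_sub_div_same] at this
      have h5 : ((a':ℝ) - a) ≤ 1 := by
        have := (div_le_div_iff₀ hq0 hq0).1 this
        nlinarith
      linarith
    exact_mod_cast this
  -- fibers have at most 2 elements
  have hfib : ∀ v ∈ A.image g, (A.filter (fun a => g a = v)).card ≤ 2 := by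
    intro v hv
    set F := A.filter (fun a => g a = v) with hF
    rcases F.eq_empty_or_nonempty with h | h
    · simp [h]
    · have hm := F.min'_mem h
      have hsub : F ⊆ Finset.Icc (F.min' h) (F.min' h + 1) := by
        intro a haF
        rw [Finset.mem_Icc]
        refine ⟨F.min'_le a haF, ?_⟩
        have h1 : F.min' h ∈ A := (Finset.filter_subset _ _) hm
        have h2 : a ∈ A := (Finset.filter_subset _ _) haF
        have e1 : g (F.min' h) = v := (Finset.mem_filter.1 hm).2
        have e2 : g a = v := (Finset.mem_filter.1 haF).2
        exact fiber _ h1 _ h2 (e1.trans e2.symm)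
      calc F.card ≤ (Finset.Icc (F.min' h) (F.min' h + 1)).card := Finset.card_le_card hsub
        _ ≤ 2 := by rw [Nat.card_Icc]; omega
  -- image is contained in W-valued functions
  have himg : A.image g ⊆ Fintype.piFinset (fun _ : Fin n => W) := by
    intro v hv
    rw [Finset.mem_image] at hv
    obtain ⟨a, ha, rfl⟩ := hv
    rw [Fintype.mem_piFinset]
    intro i
    exact hD1 a ha i
  calc A.card ≤ 2 * (A.image g).card := Finset.card_le_mul_card_image _ 2 hfib
    _ ≤ 2 * (Fintype.piFinset (fun _ : Fin n => W)).card :=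
        Nat.mul_le_mul_left 2 (Finset.card_le_card himg)
    _ = 2 * W.card ^ n := by rw [Fintype.card_piFinset]; simp


lemma order_le (hb : 2 ≤ b) (W : Finset ℕ) (hWsub : W ⊆ Finset.range b)
    (q : ℕ) (hq : q.Prime) (hcop : Nat.Coprime b q) (r : ℚ)
    (hden : r.den = q) (hr : (r:ℝ) ∈ missingDigitSet b W)
    (n : ℕ) (hn : (q:ℝ) ≤ (b:ℝ)^n) :
    orderOf (ZMod.unitOfCoprime b hcop) ≤ 2 * W.card ^ n := by
  classical
  haveI : Fact q.Prime := ⟨hq⟩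
  set u : (ZMod q)ˣ := ZMod.unitOfCoprime b hcop with hu
  set d := orderOf u with hd
  obtain ⟨w, hw, hrw⟩ := (mem_iff_tail (r:ℝ) W).1 hr
  have hwb : ∀ j, w j < b := fun j => by simpa using hWsub (hw j)
  have hq0 : (0:ℝ) < q := by exact_mod_cast hq.pos
  -- integer parts
  have hM : ∀ k : ℕ, ∃ m : ℤ, (b:ℝ)^k * tail b w 0 = m + tail b w k :=
    pow_mul_eq_int_add_tail hb w hwb
  choose M hM using hM
  set F : ℕ → ℤ := fun k => r.num * b^k - M k * q with hF
  have hFval : ∀ k, (F k : ℝ) = q * tail b w k := by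
    intro k
    have h1 := hM k
    have h2 : (q:ℝ) * (r:ℝ) = (r.num : ℝ) := by
      rw [Rat.cast_def, hden]
      field_simp
    rw [← hrw] at h1
    have : (q:ℝ) * tail b w k = (q:ℝ) * ((b:ℝ)^k * (r:ℝ)) - q * M k := by
      rw [h1]; ring
    rw [this, hF]
    push_cast
    linear_combination (-((b:ℝ)^k)) * h2
  have hFnonneg : ∀ k, 0 ≤ F k := by
    intro k
    have := hFval k
    have h2 := tail_nonneg (b := b) w k
    have : (0:ℝ) ≤ (F k : ℝ) := by rw [this]; positivity
    exact_mod_cast this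
  -- cast to ZMod q
  have hFz : ∀ k, ((F k : ZMod q)) = (b : ZMod q)^k * (r.num : ZMod q) := by
    intro k
    rw [hF]
    push_cast
    simp [ZMod.natCast_self]
    ring
  have hnum : (r.num : ZMod q) ≠ 0 := by
    rw [Ne, ZMod.intCast_zmod_eq_zero_iff_dvd]
    intro hdvd
    have hred := r.reduced
    rw [hden] at hred
    have h3 : q ∣ r.num.natAbs := by
      have := Int.natAbs_dvd_natAbs.mpr hdvd
      simpa using this
    have h4 : q ∣ 1 := hred ▸ Nat.dvd_gcd h3 (dvd_refl q)
    exact hq.one_lt.ne' (Nat.dvd_one.mp h4)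
  -- injectivity on range d
  set f : ℕ → ℕ := fun k => (F k).toNat with hf
  have hinj : Set.InjOn f (Finset.range d) := by
    intro k hk k' hk' hkk'
    rw [Finset.coe_range, Set.mem_Iio] at hk hk'
    have hFe : F k = F k' := by
      have e1 := Int.toNat_of_nonneg (hFnonneg k)
      have e2 := Int.toNat_of_nonneg (hFnonneg k')
      have h5 : ((f k : ℤ)) = ((f k' : ℤ)) := by exact_mod_cast hkk'
      simp only [hf] at h5
      rwa [e1, e2] at h5
    have hz : (b : ZMod q)^k * (r.num : ZMod q) = (b : ZMod q)^k' * (r.num : ZMod q) := by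
      rw [← hFz, ← hFz, hFe]
    have hz2 : (b : ZMod q)^k = (b : ZMod q)^k' := by
      exact mul_right_cancel₀ hnum hz
    have hu2 : u^k = u^k' := by
      apply Units.ext
      have : (u : ZMod q) = (b : ZMod q) := ZMod.coe_unitOfCoprime b hcop
      rw [Units.val_pow_eq_pow_val, Units.val_pow_eq_pow_val, this]
      exact hz2
    have := pow_eq_pow_iff_modEq.mp hu2
    rw [Nat.ModEq] at this
    rw [Nat.mod_eq_of_lt hk, Nat.mod_eq_of_lt hk'] at this
    exact this
  -- the orbit finset
  set A : Finset ℕ := (Finset.range d).image f with hA2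
  have hcard : A.card = d := by
    rw [hA2, Finset.card_image_of_injOn hinj, Finset.card_range]
  have hmem : ∀ a ∈ A, ((a:ℝ)/(q:ℝ)) ∈ missingDigitSet b W := by
    intro a ha
    rw [hA2, Finset.mem_image] at ha
    obtain ⟨k, hk, rfl⟩ := ha
    rw [mem_iff_tail]
    refine ⟨fun j => w (k + j), fun j => hw _, ?_⟩
    have h1 : ((F k).toNat : ℝ) = (F k : ℝ) := by
      exact_mod_cast Int.toNat_of_nonneg (hFnonneg k)
    rw [hf]
    show ((F k).toNat : ℝ)/(q:ℝ) = tail b (fun j => w (k + j)) 0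
    have h3 : tail b (fun j => w (k + j)) 0 = tail b w k := by
      unfold tail
      apply tsum_congr
      intro j
      simp
    rw [h3, h1, hFval k]
    field_simp
  calc d = A.card := hcard.symm
    _ ≤ 2 * W.card ^ n := count_lemma hb W hWsub q n hq.pos hn A hmem


/-- eventual domination -/
lemma eventual_ineq (hb : 3 ≤ b) : ∃ N : ℕ, 1 ≤ N ∧ ∀ n, N ≤ n → 4*(b-1)^n + 2 ≤ b^(n-1) := by
  have hb0 : (0:ℝ) < b := by positivity
  have hb1 : (1:ℝ) < b := by exact_mod_cast by omega
  set c : ℝ := ((b:ℝ) - 1)/b with hc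
  have hc0 : 0 ≤ c := by
    apply div_nonneg _ hb0.le; linarith
  have hc1 : c < 1 := by
    rw [hc, div_lt_one hb0]; linarith
  have htend := tendsto_pow_atTop_nhds_zero_of_lt_one hc0 hc1
  have hev : ∀ᶠ n in Filter.atTop, c^n < 1/(8*b) :=
    htend.eventually_lt_const (by positivity)
  obtain ⟨N, hN⟩ := Filter.eventually_atTop.mp hev
  refine ⟨max N 1, le_max_right _ _, ?_⟩
  intro n hn
  have hn1 : 1 ≤ n := le_trans (le_max_right _ _) hn
  have hNn : N ≤ n := le_trans (le_max_left _ _) hn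
  have h1 : c^n < 1/(8*b) := hN n hNn
  -- 8*(b-1)^n < b^(n-1) in ℝ
  have h2 : ((b:ℝ)-1)^n = c^n * (b:ℝ)^n := by
    rw [hc, div_pow]
    field_simp
  have h3 : (8:ℝ)*((b:ℝ)-1)^n < (b:ℝ)^(n-1) := by
    have hbn : (0:ℝ) < (b:ℝ)^n := by positivity
    have h4 : (b:ℝ)^n = b * (b:ℝ)^(n-1) := by
      rw [← pow_succ']
      congr 1
      omega
    rw [h2]
    calc 8 * (c^n * (b:ℝ)^n) < 8 * ((1/(8*b)) * (b:ℝ)^n) := by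
          apply mul_lt_mul_of_pos_left _ (by norm_num)
          exact mul_lt_mul_of_pos_right h1 hbn
      _ = (b:ℝ)^n / b := by field_simp
      _ = (b:ℝ)^(n-1) := by rw [h4]; field_simp
  have h5 : 8*(b-1)^n ≤ b^(n-1) := by
    have hcast : ((8*(b-1)^n : ℕ) : ℝ) < ((b^(n-1) : ℕ) : ℝ) := by
      push_cast [Nat.cast_sub (by omega : 1 ≤ b)]
      exact h3
    exact_mod_cast hcast.le
  have h6 : 1 ≤ (b-1)^n := Nat.one_le_pow _ _ (by omega)
  omega

/-- rationals in [0,1] with bounded denominator form a finite set -/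
lemma bounded_den_finite (M : ℕ) :
    {r : ℚ | r.den ≤ M ∧ 0 ≤ r ∧ r ≤ 1}.Finite := by
  classical
  apply Set.Finite.subset
    (Set.finite_range (fun p : Finset.Icc (0:ℤ) M × Finset.Icc 1 M => ((p.1 : ℤ) : ℚ)/((p.2 : ℕ) : ℚ)))
  rintro r ⟨hden, h0, h1⟩
  have hd0 : 0 < r.den := r.pos
  have hnum0 : 0 ≤ r.num := Rat.num_nonneg.mpr h0
  have hnum1 : (r.num : ℚ) ≤ (r.den : ℚ) := by
    have : (r.num : ℚ) = r * r.den := by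
      exact (Rat.mul_den_eq_num r).symm
    rw [this]
    calc r * (r.den:ℚ) ≤ 1 * (r.den:ℚ) := by
          apply mul_le_mul_of_nonneg_right h1 (by positivity)
      _ = (r.den:ℚ) := one_mul _
  have hnum1' : r.num ≤ (r.den : ℤ) := by exact_mod_cast hnum1
  have hnumM : r.num ≤ (M:ℤ) := le_trans hnum1' (by exact_mod_cast hden)
  refine ⟨(⟨r.num, ?_⟩, ⟨r.den, ?_⟩), ?_⟩
  · rw [Finset.mem_Icc]; exact ⟨hnum0, hnumM⟩
  · rw [Finset.mem_Icc]; exact ⟨hd0, hden⟩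
  · show (r.num : ℚ) / (r.den : ℚ) = r
    exact Rat.num_div_den r

/-- divisor structure of 2p' -/
lemma dvd_two_of (d p' : ℕ) (hp' : p'.Prime) (hd : 0 < d) (hdvd : d ∣ 2 * p')
    (hlt : d < p') : d ∣ 2 := by
  have hg : Nat.gcd d p' = 1 ∨ Nat.gcd d p' = p' :=
    (Nat.Prime.eq_one_or_self_of_dvd hp' _ (Nat.gcd_dvd_right d p'))
  rcases hg with h | h
  · exact (Nat.Coprime.dvd_of_dvd_mul_right h hdvd)
  · exfalso
    have : p' ∣ d := h ▸ Nat.gcd_dvd_left d p'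
    exact absurd (Nat.le_of_dvd hd this) (not_le.mpr hlt)


end Stmt15

/-- `C_{b,W}` contains only finitely many rationals `p/q` in lowest
terms whose denominator `q` is a safe prime (both `q` and `(q-1)/2` prime). -/
theorem stmt_15 (b : ℕ) (hb : 3 ≤ b) (W : Finset ℕ)
    (hWsub : W ⊆ Finset.range b) (hW2 : 2 ≤ W.card) (hWne : W ≠ Finset.range b) :
    {r : ℚ | (r : ℝ) ∈ missingDigitSet b W ∧
      Nat.Prime r.den ∧ Nat.Prime ((r.den - 1) / 2)}.Finite := by
  classical
  have hb2 : 2 ≤ b := by omega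
  obtain ⟨N, hN1, hNineq⟩ := Stmt15.eventual_ineq hb
  set M := max (b^N) (b^2) with hM
  apply Set.Finite.subset (Stmt15.bounded_den_finite M)
  rintro r ⟨hrC, hqprime, hp'prime⟩
  set q := r.den with hq
  obtain ⟨w, hw, hrw⟩ := (Stmt15.mem_iff_tail (r:ℝ) W).1 hrC
  have hwb : ∀ j, w j < b := fun j => by simpa using hWsub (hw j)
  have h0 : (0:ℝ) ≤ (r:ℝ) := hrw ▸ Stmt15.tail_nonneg w 0
  have h1 : (r:ℝ) ≤ 1 := hrw ▸ Stmt15.tail_le_one hb2 w hwb 0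
  have h0' : 0 ≤ r := by exact_mod_cast h0
  have h1' : r ≤ 1 := by exact_mod_cast h1
  refine ⟨?_, h0', h1'⟩
  by_cases hcase : q ≤ b^N
  · exact le_trans hcase (le_max_left _ _)
  push_neg at hcase
  have hbN : b ≤ b^N := Nat.le_self_pow (by omega) b
  have hqgtb : b < q := lt_of_le_of_lt hbN hcase
  have hndvd : ¬ q ∣ b := fun h => absurd (Nat.le_of_dvd (by omega) h) (by omega)
  have hcop : Nat.Coprime b q :=
    ((Nat.Prime.coprime_iff_not_dvd hqprime).mpr hndvd).symm
  haveI : Fact q.Prime := ⟨hqprime⟩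
  set u := ZMod.unitOfCoprime b hcop with hu
  set d := orderOf u with hd
  set n := Nat.log b q + 1 with hn
  have hb1 : 1 < b := by omega
  have hq1 : q ≠ 0 := hqprime.pos.ne'
  have hqlt : q < b^n := Nat.lt_pow_succ_log_self hb1 q
  have hlow : b^(n-1) ≤ q := by
    simpa [hn] using Nat.pow_log_le_self b hq1
  have hnN : N ≤ n := by
    have := (Nat.le_log_iff_pow_le hb1 hq1).mpr hcase.le
    omega
  have hord : d ≤ 2 * W.card ^ n :=
    Stmt15.order_le hb2 W hWsub q hqprime hcop r rfl hrC n (by exact_mod_cast hqlt.le)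
  have hWcard : W.card ≤ b - 1 := by
    have hss : W ⊂ Finset.range b := Finset.ssubset_iff_subset_ne.mpr ⟨hWsub, hWne⟩
    have := Finset.card_lt_card hss
    rw [Finset.card_range] at this
    omega
  set p' := (q-1)/2 with hp'
  have hqodd : q % 2 = 1 := Nat.odd_iff.mp (hqprime.odd_of_ne_two (by omega))
  have h2p' : 2 * p' = q - 1 := by omega
  have hdvd : d ∣ q - 1 := by
    have h3 := orderOf_dvd_card (x := u)
    rwa [ZMod.card_units_eq_totient, Nat.totient_prime hqprime] at h3
  have hineq := hNineq n hnN
  have c1 : d ≤ 2*(b-1)^n :=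
    le_trans hord (by
      have := Nat.pow_le_pow_left hWcard n
      omega)
  have e1 : 2*d + 2 ≤ q := by
    have : 2*d ≤ 4*(b-1)^n := by omega
    omega
  have hdlt : d < p' := by omega
  have hd2 : d ∣ 2 :=
    Stmt15.dvd_two_of d p' hp'prime (orderOf_pos u) (by rw [h2p']; exact hdvd) hdlt
  have hu2 : u^2 = 1 := orderOf_dvd_iff_pow_eq_one.mp hd2
  have hbz : ((b:ZMod q))^2 = 1 := by
    have h4 := congrArg (Units.val) hu2
    rw [Units.val_pow_eq_pow_val] at h4
    rw [hu, ZMod.coe_unitOfCoprime] at h4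
    simpa using h4
  have hz : ((b^2 - 1 : ℕ) : ZMod q) = 0 := by
    rw [Nat.cast_sub (by nlinarith : 1 ≤ b^2)]
    push_cast
    rw [hbz]
    ring
  have hqdvd : q ∣ b^2 - 1 := (ZMod.natCast_eq_zero_iff _ _).mp hz
  have h9 : 9 ≤ b^2 := by nlinarith
  have hqle : q ≤ b ^ 2 - 1 := Nat.le_of_dvd (by omega) hqdvd
  have : q ≤ b ^ 2 := by omega
  exact le_trans this (le_max_right (b^N) (b^2))
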